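/- Consider an indefinite Type A structure normalized so that ρ = antidiag(1,1), with Γ₁₁¹ = Γ₁₂² = x, Γ₁₂¹ = Γ₂₂² = y, and Γ₁₁²Γ₂₂¹ = xy − 1. If xy > 1 and Γ₁₁² = Γ₂₂¹ = √(xy−1), then with s = xy > 1 and t satisfying x = √s·t, y = √s/t (t ≠ 0), the invariants satisfy ψ₃ = −2 + 8s and Ψ₃ = 1 − 4s + 8s² − 4s^{3/2}√(s−1)·(t³ + t^{-3}). -/

import Mathlib

theorem stmt_12 (s t x y : ℝ) (hs : 1 < s) (ht : t ≠ 0)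
    (hxt : x = Real.sqrt s * t) (hyt : y = Real.sqrt s / t) :
    -- Christoffel symbols Γ₁₁¹ = Γ₁₂² = x, Γ₁₂¹ = Γ₂₂² = y, Γ₁₁² = Γ₂₂¹ = √(xy−1)
    let G : Fin 2 → Fin 2 → Fin 2 → ℝ :=
      ![![![x, Real.sqrt (x*y - 1)], ![y, x]],
        ![![y, x], ![Real.sqrt (x*y - 1), y]]]
    -- the Ricci tensor (equal to antidiag(1,1))
    let ρ : Matrix (Fin 2) (Fin 2) ℝ :=
      Matrix.of fun i j => ∑ l, ∑ m, (G i j m * G l m l - G l j m * G i m l)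
    let ρ3 : Matrix (Fin 2) (Fin 2) ℝ :=
      Matrix.of fun i j => ∑ k, ∑ l, G i k l * G j l k
    (∑ i, ∑ j, ρ⁻¹ i j * ρ3 i j) = -2 + 8*s ∧
    ρ3.det / ρ.det =
      1 - 4*s + 8*s^2 - 4*(Real.sqrt s)^3 * Real.sqrt (s - 1) * (t^3 + (t^3)⁻¹) := by
  have hs0 : (0:ℝ) ≤ s := by linarith
  have hu : Real.sqrt s * Real.sqrt s = s := Real.mul_self_sqrt hs0
  have hxy : x * y = s := by
    rw [hxt, hyt]; field_simp; linear_combination hu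
  have h1 : x * y - 1 = s - 1 := by rw [hxy]
  have hx3 : x^3 + y^3 = (Real.sqrt s)^3 * (t^3 + (t^3)⁻¹) := by
    rw [hxt, hyt]; field_simp
  obtain ⟨q, hqdef⟩ : ∃ q, q = Real.sqrt (x*y-1) := ⟨_, rfl⟩
  have hq0 : q * q = x * y - 1 := by
    rw [hqdef]; exact Real.mul_self_sqrt (by rw [h1]; linarith)
  have hq2 : q = Real.sqrt (s - 1) := by rw [hqdef, h1]
  rw [← hqdef]
  intro G ρ ρ3
  have hρ : ρ = !![(0:ℝ),1;1,0] := by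
    ext i j
    fin_cases i <;> fin_cases j <;>
      simp [ρ, G, Fin.sum_univ_two] <;>
      first
        | ring1
        | linear_combination hq0
        | linear_combination -hq0
  have hinv : ρ⁻¹ = !![(0:ℝ),1;1,0] := by
    apply Matrix.inv_eq_right_inv
    rw [hρ]
    norm_num [Matrix.mul_fin_two]
    rw [← Matrix.one_fin_two]
  constructor
  · rw [hinv]
    simp [ρ3, G, Fin.sum_univ_two]
    linear_combination 8*hxy + 2*hq0
  · rw [hρ]
    simp [ρ3, G, Matrix.det_fin_two, Fin.sum_univ_two]
    rw [← hq2]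
    linear_combination (-4*q) * hx3 + (q*q + s - 1 + 2*x*y) * hq0 +
      (q*q + s - 1 + 2*x*y + 5*(x*y+s) + 2*(s-1)) * hxy
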